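/- Fix D and d. There exists a constant C = C(D,d) such that for every d-tuple 𝒜 of D×D complex matrices: if for some N the span of all length-N products A_{i₁}⋯A_{i_N} equals M_D(ℂ), then already the span of all length-C products equals M_D(ℂ). -/

import Mathlib

/-- `𝒜` is `N`-injective if the length-`N` products of its matrices span
all of `M_D(ℂ)`. -/
def NInjective {D d : ℕ} (A : Fin d → Matrix (Fin D) (Fin D) ℂ) (N : ℕ) : Prop :=
  Submodule.span ℂ
    {M | ∃ i : Fin N → Fin d, M = (List.ofFn fun k => A (i k)).prod} = ⊤

namespace QW

open Matrix MvPolynomial Module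

variable {D d : ℕ}

/-- The product of matrices along a word. -/
noncomputable def wprod (A : Fin d → Matrix (Fin D) (Fin D) ℂ) {N : ℕ}
    (w : Fin N → Fin d) : Matrix (Fin D) (Fin D) ℂ :=
  (List.ofFn fun k => A (w k)).prod

lemma ninjective_iff_span_range (A : Fin d → Matrix (Fin D) (Fin D) ℂ) (N : ℕ) :
    NInjective A N ↔ Submodule.span ℂ (Set.range (wprod A (N := N))) = ⊤ := by
  unfold NInjective
  congr! 2
  ext M
  simp [Set.mem_range, wprod, eq_comm]

/-- Step lemma: `N`-injectivity implies `(N+1)`-injectivity for `N ≥ 1`. -/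
lemma step (A : Fin d → Matrix (Fin D) (Fin D) ℂ) (N : ℕ)
    (h : NInjective A (N + 1)) : NInjective A (N + 2) := by
  unfold NInjective at h ⊢
  set T := Submodule.span ℂ
    {M | ∃ i : Fin (N + 2) → Fin d, M = (List.ofFn fun k => A (i k)).prod} with hT
  have step1 : ∀ (j : Fin d) (M : Matrix (Fin D) (Fin D) ℂ), A j * M ∈ T := by
    intro j M
    have h1 : Submodule.span ℂ
        {M | ∃ i : Fin (N + 1) → Fin d, M = (List.ofFn fun k => A (i k)).prod}
        ≤ Submodule.comap (LinearMap.mulLeft ℂ (A j)) T := by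
      rw [Submodule.span_le]
      rintro P ⟨i, rfl⟩
      refine Submodule.mem_comap.mpr ?_
      rw [LinearMap.mulLeft_apply]
      apply Submodule.subset_span
      refine ⟨Fin.cons j i, ?_⟩
      rw [List.ofFn_succ, List.prod_cons]
      simp [Fin.cons_succ, Fin.cons_zero]
    rw [h, top_le_iff] at h1
    have : M ∈ Submodule.comap (LinearMap.mulLeft ℂ (A j)) T := by
      rw [h1]; trivial
    simpa using this
  rw [eq_top_iff, ← h, Submodule.span_le]
  rintro P ⟨i, rfl⟩
  rw [List.ofFn_succ, List.prod_cons]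
  exact step1 (i 0) _

lemma mono' (A : Fin d → Matrix (Fin D) (Fin D) ℂ) (N : ℕ)
    (h : NInjective A (N + 1)) : ∀ K, NInjective A (N + 1 + K) := by
  intro K
  induction K with
  | zero => simpa using h
  | succ K ih =>
    have he : N + 1 + (K + 1) = (N + K) + 2 := by omega
    rw [he]
    have ih' : NInjective A ((N + K) + 1) := by
      rwa [show N + 1 + K = N + K + 1 by omega] at ih
    exact step A (N + K) ih'

lemma mono (A : Fin d → Matrix (Fin D) (Fin D) ℂ) (N M : ℕ) (hNM : N + 1 ≤ M)
    (h : NInjective A (N + 1)) : NInjective A M := by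
  obtain ⟨K, rfl⟩ := Nat.exists_eq_add_of_le hNM
  exact mono' A N h K

/-! ### Polynomial matrices -/

/-- The generic matrix of variables for the `i`-th matrix. -/
noncomputable def pmat (D d : ℕ) (i : Fin d) :
    Matrix (Fin D) (Fin D) (MvPolynomial (Fin d × Fin D × Fin D) ℂ) :=
  Matrix.of fun a b => X (i, a, b)

/-- Generic product of matrices along a word. -/
noncomputable def pprod (D d : ℕ) {N : ℕ} (w : Fin N → Fin d) :
    Matrix (Fin D) (Fin D) (MvPolynomial (Fin d × Fin D × Fin D) ℂ) :=
  (List.ofFn fun k => pmat D d (w k)).prod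

/-- The point of affine space corresponding to a tuple of matrices. -/
def pt (A : Fin d → Matrix (Fin D) (Fin D) ℂ) : Fin d × Fin D × Fin D → ℂ :=
  fun p => A p.1 p.2.1 p.2.2

lemma pprod_eval (A : Fin d → Matrix (Fin D) (Fin D) ℂ) {N : ℕ} (w : Fin N → Fin d) :
    (pprod D d w).map (eval (pt A)) = wprod A w := by
  have : (pprod D d w).map (eval (pt A))
      = (eval (pt A)).mapMatrix (pprod D d w) := rfl
  have h2 : (⇑(eval (pt A)).mapMatrix ∘ fun k : Fin N => pmat D d (w k))
      = fun k => A (w k) := by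
    funext k
    ext a b
    simp [pmat, pt, RingHom.mapMatrix_apply, Matrix.map_apply]
  rw [this, pprod, map_list_prod, List.map_ofFn, h2, wprod]

/-- The determinant polynomial attached to a choice of `D*D` words. -/
noncomputable def qpoly (D d N : ℕ) (f : Fin (D * D) → (Fin N → Fin d)) :
    MvPolynomial (Fin d × Fin D × Fin D) ℂ :=
  (Matrix.of fun k l : Fin (D * D) =>
    pprod D d (f k) (finProdFinEquiv.symm l).1 (finProdFinEquiv.symm l).2).det

lemma eval_qpoly (A : Fin d → Matrix (Fin D) (Fin D) ℂ) {N : ℕ}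
    (f : Fin (D * D) → (Fin N → Fin d)) :
    eval (pt A) (qpoly D d N f)
      = (Matrix.of fun k l : Fin (D * D) =>
          wprod A (f k) (finProdFinEquiv.symm l).1 (finProdFinEquiv.symm l).2).det := by
  rw [qpoly, RingHom.map_det]
  congr 1
  ext k l
  have := pprod_eval A (f k)
  calc (eval (pt A)) (pprod D d (f k) (finProdFinEquiv.symm l).1 (finProdFinEquiv.symm l).2)
      = ((pprod D d (f k)).map (eval (pt A)))
          (finProdFinEquiv.symm l).1 (finProdFinEquiv.symm l).2 := rfl
    _ = wprod A (f k) (finProdFinEquiv.symm l).1 (finProdFinEquiv.symm l).2 := by rw [this]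

/-- The coordinate linear map from matrices to tuples. -/
noncomputable def coordLM (D : ℕ) :
    Matrix (Fin D) (Fin D) ℂ →ₗ[ℂ] (Fin (D * D) → ℂ) where
  toFun := fun M l => M (finProdFinEquiv.symm l).1 (finProdFinEquiv.symm l).2
  map_add' := fun M N => rfl
  map_smul' := fun c M => rfl

lemma coordLM_injective (D : ℕ) : Function.Injective (coordLM D) := by
  intro M N h
  ext a b
  have := congrFun h (finProdFinEquiv (a, b))
  simp only [coordLM, LinearMap.coe_mk, AddHom.coe_mk, Equiv.symm_apply_apply] at this
  change M (finProdFinEquiv.symm (finProdFinEquiv (a, b))).1 (finProdFinEquiv.symm (finProdFinEquiv (a, b))).2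
    = N (finProdFinEquiv.symm (finProdFinEquiv (a, b))).1 (finProdFinEquiv.symm (finProdFinEquiv (a, b))).2 at this
  rwa [Equiv.symm_apply_apply] at this

lemma finrank_mat : finrank ℂ (Matrix (Fin D) (Fin D) ℂ) = D * D := by
  rw [Module.finrank_matrix]
  simp

/-- Key equivalence: `N`-injectivity is the nonvanishing of some determinant polynomial. -/
lemma ninj_iff (A : Fin d → Matrix (Fin D) (Fin D) ℂ) (N : ℕ) :
    NInjective A N ↔
      ∃ f : Fin (D * D) → (Fin N → Fin d), eval (pt A) (qpoly D d N f) ≠ 0 := by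
  rw [ninjective_iff_span_range]
  constructor
  · intro h
    obtain ⟨s, hsub, hspan, hind⟩ := exists_linearIndependent ℂ (Set.range (wprod A (N := N)))
    rw [h] at hspan
    have hsf : s.Finite := hind.setFinite
    haveI := hsf.fintype
    have hcard : Fintype.card s = D * D := by
      have h1 : finrank ℂ (Submodule.span ℂ s) = s.toFinset.card :=
        finrank_span_set_eq_card hind
      rw [hspan, finrank_top, finrank_mat, Set.toFinset_card] at h1
      omega
    let g : Fin (D * D) ≃ s := (Fintype.equivFinOfCardEq hcard).symm
    have hex : ∀ k : Fin (D * D), ∃ w : Fin N → Fin d, wprod A w = (g k : Matrix _ _ ℂ) :=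
      fun k => hsub (g k).2
    choose f hf using hex
    refine ⟨f, ?_⟩
    rw [eval_qpoly]
    have hrows : LinearIndependent ℂ fun k : Fin (D * D) =>
        (Matrix.of fun k l : Fin (D * D) =>
          wprod A (f k) (finProdFinEquiv.symm l).1 (finProdFinEquiv.symm l).2) k := by
      have hind2 : LinearIndependent ℂ fun k : Fin (D * D) => wprod A (f k) := by
        have : (fun k : Fin (D * D) => wprod A (f k))
            = (fun x : s => (x : Matrix (Fin D) (Fin D) ℂ)) ∘ g := by
          funext k; exact hf k
        rw [this]
        exact hind.comp g g.injective
      have := hind2.map' (coordLM D) (LinearMap.ker_eq_bot.mpr (coordLM_injective D))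
      exact this
    have := Matrix.linearIndependent_rows_iff_isUnit.mp hrows
    rw [Matrix.isUnit_iff_isUnit_det] at this
    exact this.ne_zero
  · rintro ⟨f, hf⟩
    rw [eval_qpoly] at hf
    set B := Matrix.of fun k l : Fin (D * D) =>
        wprod A (f k) (finProdFinEquiv.symm l).1 (finProdFinEquiv.symm l).2 with hB
    have hU : IsUnit B := by
      rw [Matrix.isUnit_iff_isUnit_det]
      exact isUnit_iff_ne_zero.mpr hf
    have hrows : LinearIndependent ℂ fun k => B k :=
      Matrix.linearIndependent_rows_iff_isUnit.mpr hU
    have hind : LinearIndependent ℂ fun k : Fin (D * D) => wprod A (f k) := by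
      apply LinearIndependent.of_comp (coordLM D)
      exact hrows
    have hspan : Submodule.span ℂ (Set.range fun k => wprod A (f k)) = ⊤ :=
      hind.span_eq_top_of_card_eq_finrank' (by rw [finrank_mat, Fintype.card_fin])
    rw [eq_top_iff, ← hspan]
    apply Submodule.span_mono
    rintro _ ⟨k, rfl⟩
    exact ⟨f k, rfl⟩

/-- The variety of non-`N`-injective tuples. -/
def VV (D d N : ℕ) : Set (Fin d × Fin D × Fin D → ℂ) :=
  {x | ∀ f : Fin (D * D) → (Fin N → Fin d), eval x (qpoly D d N f) = 0}

/-- Matrices from a point. -/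
def matOf (x : Fin d × Fin D × Fin D → ℂ) : Fin d → Matrix (Fin D) (Fin D) ℂ :=
  fun i => Matrix.of fun a b => x (i, a, b)

lemma pt_matOf (x : Fin d × Fin D × Fin D → ℂ) : pt (matOf x) = x := rfl

lemma matOf_pt (A : Fin d → Matrix (Fin D) (Fin D) ℂ) : matOf (pt A) = A := rfl

lemma mem_VV_iff (x : Fin d × Fin D × Fin D → ℂ) (N : ℕ) :
    x ∈ VV D d N ↔ ¬ NInjective (matOf x) N := by
  rw [ninj_iff, pt_matOf]
  simp [VV]

end QW

/-- Non-effective quantum Wielandt theorem. -/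
theorem quantum_wielandt (D d : ℕ) :
    ∃ C : ℕ, ∀ A : Fin d → Matrix (Fin D) (Fin D) ℂ,
      (∃ N : ℕ, NInjective A N) → NInjective A C := by
  classical
  open QW MvPolynomial Module in
  -- Case `D ≤ 1`: then `0`-injectivity always holds.
  by_cases hD : D ≤ 1
  · refine ⟨0, fun A _ => ?_⟩
    unfold NInjective
    rw [eq_top_iff]
    intro M _
    have hset : {M : Matrix (Fin D) (Fin D) ℂ |
        ∃ i : Fin 0 → Fin d, M = (List.ofFn fun k => A (i k)).prod} = {1} := by
      ext P
      simp [List.ofFn_zero]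
    rw [hset]
    interval_cases D
    · have : M = (0 : ℂ) • 1 := Subsingleton.elim _ _
      rw [this]
      exact Submodule.smul_mem _ _ (Submodule.subset_span rfl)
    · have : M = M 0 0 • 1 := by
        ext a b
        fin_cases a; fin_cases b
        simp
      rw [this]
      exact Submodule.smul_mem _ _ (Submodule.subset_span rfl)
  · -- Case `D ≥ 2`: the Noetherian chain argument.
    push_neg at hD
    -- ascending chain of vanishing ideals
    have hmonoV : ∀ N : ℕ, VV D d (N + 2) ⊆ VV D d (N + 1) := by
      intro N x hx
      rw [mem_VV_iff] at hx ⊢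
      intro hinj
      exact hx (step (matOf x) N hinj)
    let J : ℕ →o Ideal (MvPolynomial (Fin d × Fin D × Fin D) ℂ) :=
      ⟨fun N => vanishingIdeal ℂ (VV D d (N + 1)), by
        intro a b hab
        induction b with
        | zero => simp_all
        | succ b ih =>
          rcases Nat.lt_or_ge a (b + 1) with hlt | hge
          · exact le_trans (ih (by omega)) (vanishingIdeal_anti_mono (hmonoV b))
          · have : a = b + 1 := by omega
            subst this; exact le_rfl⟩
    haveI : IsNoetherian (MvPolynomial (Fin d × Fin D × Fin D) ℂ)
        (MvPolynomial (Fin d × Fin D × Fin D) ℂ) :=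
      inferInstanceAs (IsNoetherianRing _)
    obtain ⟨C₀, hC₀⟩ := monotone_stabilizes_iff_noetherian.mpr this J
    refine ⟨C₀ + 1, fun A ⟨N, hN⟩ => ?_⟩
    -- the witness N is positive since D ≥ 2
    have hNpos : 1 ≤ N := by
      by_contra hN0
      push_neg at hN0
      interval_cases N
      haveI : NeZero D := ⟨by omega⟩
      haveI : NeZero (1 : Fin D) := ⟨by
        intro h1
        have h2 := congrArg Fin.val h1
        rw [Fin.val_one', Fin.val_zero, Nat.mod_eq_of_lt (by omega)] at h2
        omega⟩
      unfold NInjective at hN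
      have hset : {M : Matrix (Fin D) (Fin D) ℂ |
          ∃ i : Fin 0 → Fin d, M = (List.ofFn fun k => A (i k)).prod} = {1} := by
        ext P; simp [List.ofFn_zero]
      rw [hset] at hN
      have hmem : (Matrix.single 0 1 1 : Matrix (Fin D) (Fin D) ℂ)
          ∈ Submodule.span ℂ ({1} : Set (Matrix (Fin D) (Fin D) ℂ)) := by
        rw [hN]; trivial
      rw [Submodule.mem_span_singleton] at hmem
      obtain ⟨c, hc⟩ := hmem
      have h01 := congrFun (congrFun hc 0) 1
      simp [Matrix.single, Matrix.one_apply, (NeZero.ne' (1 : Fin D)).symm] at h01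
    obtain ⟨N', rfl⟩ := Nat.exists_eq_add_of_le hNpos
    -- let M be large
    set M' : ℕ := max N' C₀ with hM'
    have hMinj : NInjective A (M' + 1) := mono A N' (M' + 1) (by omega) (by rwa [add_comm])
    have hJ : J C₀ = J M' := hC₀ M' (le_max_right _ _)
    -- conclude
    by_contra hC
    have hxV : pt A ∈ VV D d (C₀ + 1) := by
      rw [mem_VV_iff, matOf_pt]
      exact hC
    have hxZ : pt A ∈ VV D d (M' + 1) := by
      intro f
      have hmem : qpoly D d (M' + 1) f ∈ J M' := by
        show qpoly D d (M' + 1) f ∈ vanishingIdeal ℂ (VV D d (M' + 1))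
        rw [mem_vanishingIdeal_iff]
        intro y hy
        exact hy f
      rw [← hJ] at hmem
      have hmem' : qpoly D d (M' + 1) f ∈ vanishingIdeal ℂ (VV D d (C₀ + 1)) := hmem
      exact (mem_vanishingIdeal_iff.mp hmem') (pt A) hxV
    rw [mem_VV_iff, matOf_pt] at hxZ
    exact hxZ hMinj
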